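/- Let x_1,…,x_n ∈ ℝ^d and suppose every configuration over an r-element subset of {1,…,n} has positive definite pooled SSP matrix. Let R = (R_1,…,R_g), with underlying index set R, minimize det W_R over all configurations over r-element subsets of {1,…,n}. Then for every j with R_j nonempty, every i ∈ R_j and every i' ∉ R one has (x_i − m_R(j))^T W_R^{-1} (x_i − m_R(j)) ≤ min_{1≤l≤g} (x_{i'} − m_R(l))^T W_R^{-1} (x_{i'} − m_R(l)); consequently each nonempty cluster R_j is separated from the set of discarded observations by the ellipsoid {x : (x − m_R(j))^T W_R^{-1} (x − m_R(j)) ≤ K_j} for a suitable K_j. -/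

import Mathlib

open Matrix Finset Real

/-- The sample mean of the points `x i`, `i ∈ S`; a fixed a-priori vector `dflt` if `S = ∅`. -/
noncomputable def clusterMean {n d : ℕ} (x : Fin n → Fin d → ℝ) (dflt : Fin d → ℝ)
    (S : Finset (Fin n)) : Fin d → ℝ :=
  if S.Nonempty then (S.card : ℝ)⁻¹ • ∑ i ∈ S, x i else dflt

/-- The pooled (within-groups) SSP matrix of the configuration `C` for the data `x`:
`W = Σ_j Σ_{i ∈ C j} (x i − m_j)(x i − m_j)ᵀ`, where `m_j` is the sample mean of cluster `j`. -/
noncomputable def pooledSSP {n d g : ℕ} (x : Fin n → Fin d → ℝ) (dflt : Fin g → Fin d → ℝ)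
    (C : Fin g → Finset (Fin n)) : Matrix (Fin d) (Fin d) ℝ :=
  ∑ j, ∑ i ∈ C j, Matrix.vecMulVec (x i - clusterMean x (dflt j) (C j))
    (x i - clusterMean x (dflt j) (C j))

/-- A configuration over an `r`-element subset of `{1,…,n}`: a family of `g` pairwise
disjoint (possibly empty) clusters whose union has exactly `r` elements. -/
def IsConfig {n g : ℕ} (r : ℕ) (C : Fin g → Finset (Fin n)) : Prop :=
  (∀ j k : Fin g, j ≠ k → Disjoint (C j) (C k)) ∧ (Finset.univ.biUnion C).card = r

/-- A family of points of `ℝ^d` is in general position if any `d+1` of them are affinely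
independent. -/
def InGeneralPosition {n d : ℕ} (x : Fin n → Fin d → ℝ) : Prop :=
  ∀ s : Finset (Fin n), s.card = d + 1 → AffineIndependent ℝ (fun i : s => x (i : Fin n))

namespace TDC
variable {n d g : ℕ} (x : Fin n → Fin d → ℝ)

noncomputable def ssp (S : Finset (Fin n)) (a : Fin d → ℝ) : Matrix (Fin d) (Fin d) ℝ :=
  ∑ i ∈ S, Matrix.vecMulVec (x i - a) (x i - a)
lemma clusterMean_apply {dflt : Fin d → ℝ} {S : Finset (Fin n)} (hS : S.Nonempty) (p : Fin d) :
    clusterMean x dflt S p = (S.card : ℝ)⁻¹ * ∑ i ∈ S, x i p := by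
  simp [clusterMean, hS, Finset.sum_apply]

lemma sum_sub_mean {dflt : Fin d → ℝ} {S : Finset (Fin n)} (hS : S.Nonempty) (p : Fin d) :
    ∑ i ∈ S, (x i p - clusterMean x dflt S p) = 0 := by
  have hc : (S.card : ℝ) ≠ 0 := by
    exact_mod_cast Finset.card_ne_zero.mpr hS
  simp only [Finset.sum_sub_distrib, clusterMean_apply x hS, Finset.sum_const, nsmul_eq_mul]
  field_simp
  ring

lemma ssp_shift {dflt : Fin d → ℝ} {S : Finset (Fin n)} (hS : S.Nonempty) (a : Fin d → ℝ) :
    ssp x S a = ssp x S (clusterMean x dflt S)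
      + (S.card : ℝ) • Matrix.vecMulVec (clusterMean x dflt S - a) (clusterMean x dflt S - a) := by
  set m := clusterMean x dflt S with hm
  ext p q
  simp only [ssp, Matrix.add_apply, Matrix.smul_apply, Matrix.sum_apply,
    Matrix.vecMulVec_apply, Pi.sub_apply, smul_eq_mul]
  have key : ∀ i ∈ S, (x i p - a p) * (x i q - a q) =
      (x i p - m p) * (x i q - m q) + (m p - a p) * (x i q - m q)
        + (x i p - m p) * (m q - a q) + (m p - a p) * (m q - a q) := by
    intro i _; ring
  rw [Finset.sum_congr rfl key]
  have hs : ∀ p, ∑ i ∈ S, (x i p - m p) = 0 := fun p => sum_sub_mean x hS p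
  simp only [Finset.sum_add_distrib, ← Finset.mul_sum, ← Finset.sum_mul,
    hs, Finset.sum_const, nsmul_eq_mul]
  ring

lemma vecMulVec_smul_smul (c : ℝ) (u : Fin d → ℝ) :
    Matrix.vecMulVec (c • u) (c • u) = (c * c) • Matrix.vecMulVec u u := by
  ext p q
  simp [Matrix.vecMulVec_apply, mul_comm, mul_assoc, mul_left_comm]

/-- mean of `S.erase i` -/
lemma mean_erase {dflt dflt' : Fin d → ℝ} {S : Finset (Fin n)} {i : Fin n}
    (hi : i ∈ S) (h2 : 2 ≤ S.card) :
    clusterMean x dflt' (S.erase i)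
      = clusterMean x dflt S + ((S.card : ℝ) - 1)⁻¹ • (clusterMean x dflt S - x i) := by
  have hS : S.Nonempty := ⟨i, hi⟩
  have hE : (S.erase i).Nonempty := by
    rw [← Finset.card_pos, Finset.card_erase_of_mem hi]; omega
  have hk : (S.card : ℝ) ≠ 0 := by exact_mod_cast Finset.card_ne_zero.mpr hS
  have hk1 : (S.card : ℝ) - 1 ≠ 0 := by
    have : (2:ℝ) ≤ (S.card : ℝ) := by exact_mod_cast h2
    linarith
  funext p
  have hcard : ((S.erase i).card : ℝ) = (S.card : ℝ) - 1 := by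
    rw [Finset.card_erase_of_mem hi]
    have : 1 ≤ S.card := by omega
    push_cast [Nat.cast_sub this]; ring
  have hsum : ∑ k ∈ S.erase i, x k p = (∑ k ∈ S, x k p) - x i p :=
    (Finset.sum_erase_eq_sub hi)
  have hm : clusterMean x dflt S p = (S.card : ℝ)⁻¹ * ∑ k ∈ S, x k p :=
    clusterMean_apply x hS p
  have h1 : ∑ k ∈ S, x k p = (S.card : ℝ) * clusterMean x dflt S p := by
    rw [hm]; field_simp
  simp only [Pi.add_apply, Pi.smul_apply, Pi.sub_apply, smul_eq_mul,
    clusterMean_apply x hE, hcard, hsum, h1]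
  field_simp
  ring

/-- removing a point from a cluster of size ≥ 2 -/
lemma ssp_erase {dflt dflt' : Fin d → ℝ} {S : Finset (Fin n)} {i : Fin n}
    (hi : i ∈ S) (h2 : 2 ≤ S.card) :
    ssp x (S.erase i) (clusterMean x dflt' (S.erase i))
      = ssp x S (clusterMean x dflt S)
        - ((S.card : ℝ) / ((S.card : ℝ) - 1)) •
            Matrix.vecMulVec (x i - clusterMean x dflt S) (x i - clusterMean x dflt S) := by
  have hS : S.Nonempty := ⟨i, hi⟩
  have hE : (S.erase i).Nonempty := by
    rw [← Finset.card_pos, Finset.card_erase_of_mem hi]; omega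
  set m := clusterMean x dflt S with hmdef
  set m' := clusterMean x dflt' (S.erase i) with hm'def
  have hk1 : (S.card : ℝ) - 1 ≠ 0 := by
    have : (2:ℝ) ≤ (S.card : ℝ) := by exact_mod_cast h2
    linarith
  -- split the full ssp about m
  have hsplit : ssp x S m = ssp x (S.erase i) m + Matrix.vecMulVec (x i - m) (x i - m) := by
    rw [ssp, ssp, ← Finset.sum_erase_add S _ hi]
  -- shift the erased ssp from m to m'
  have hshift : ssp x (S.erase i) m = ssp x (S.erase i) m'
      + (((S.erase i).card : ℝ)) • Matrix.vecMulVec (m' - m) (m' - m) :=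
    ssp_shift x hE m
  have hcard : ((S.erase i).card : ℝ) = (S.card : ℝ) - 1 := by
    rw [Finset.card_erase_of_mem hi]
    have : 1 ≤ S.card := by omega
    push_cast [Nat.cast_sub this]; ring
  have hmm : m' - m = (-(((S.card : ℝ) - 1)⁻¹)) • (x i - m) := by
    rw [hm'def, mean_erase x hi h2 (dflt := dflt)]
    funext p
    simp only [Pi.add_apply, Pi.sub_apply, Pi.smul_apply, smul_eq_mul]
    ring
  have hvv : (((S.erase i).card : ℝ)) • Matrix.vecMulVec (m' - m) (m' - m)
      = (((S.card : ℝ) - 1)⁻¹) • Matrix.vecMulVec (x i - m) (x i - m) := by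
    rw [hmm, vecMulVec_smul_smul, hcard, smul_smul]
    congr 1
    field_simp
  rw [hvv] at hshift
  have : ssp x (S.erase i) m' = ssp x S m - Matrix.vecMulVec (x i - m) (x i - m)
      - (((S.card : ℝ) - 1)⁻¹) • Matrix.vecMulVec (x i - m) (x i - m) := by
    rw [hsplit, hshift]; abel
  rw [this]
  have hco : ((S.card : ℝ) / ((S.card : ℝ) - 1)) = 1 + ((S.card : ℝ) - 1)⁻¹ := by
    field_simp
    ring
  rw [hco, add_smul, one_smul]
  abel

/-- adding a new point to a nonempty cluster -/
lemma ssp_insert {dflt dflt' : Fin d → ℝ} {T : Finset (Fin n)} {i' : Fin n}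
    (hT : T.Nonempty) (hi' : i' ∉ T) :
    ssp x (insert i' T) (clusterMean x dflt' (insert i' T))
      = ssp x T (clusterMean x dflt T)
        + ((T.card : ℝ) / ((T.card : ℝ) + 1)) •
            Matrix.vecMulVec (x i' - clusterMean x dflt T) (x i' - clusterMean x dflt T) := by
  have hk : (T.card : ℝ) ≠ 0 := by exact_mod_cast Finset.card_ne_zero.mpr hT
  have hkpos : (0:ℝ) < (T.card : ℝ) := by
    have := Finset.card_pos.mpr hT; exact_mod_cast this
  have hcardI : (insert i' T).card = T.card + 1 := Finset.card_insert_of_notMem hi'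
  have h2 : 2 ≤ (insert i' T).card := by
    rw [hcardI]; have := Finset.card_pos.mpr hT; omega
  have hiI : i' ∈ insert i' T := Finset.mem_insert_self _ _
  have hEr : (insert i' T).erase i' = T := Finset.erase_insert hi'
  set m := clusterMean x dflt T with hm
  set m'' := clusterMean x dflt' (insert i' T) with hm''
  have key := ssp_erase x (dflt := dflt') (dflt' := dflt) hiI h2
  rw [hEr] at key
  -- x i' - m'' = (k/(k+1)) • (x i' - m)
  have hmean := mean_erase x (dflt := dflt') (dflt' := dflt) hiI h2
  rw [hEr] at hmean
  have hxm : x i' - m'' = ((T.card : ℝ) / ((T.card : ℝ) + 1)) • (x i' - m) := by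
    have hk1 : ((insert i' T).card : ℝ) - 1 = (T.card : ℝ) := by
      rw [hcardI]; push_cast; ring
    -- from hmean : m = m'' + (k)⁻¹ • (m'' - x i')   (card of insert minus 1 = T.card)
    rw [hk1] at hmean
    -- hmean : m = m'' + (T.card:ℝ)⁻¹ • (m'' - x i')
    funext p
    have := congrFun hmean p
    simp only [Pi.add_apply, Pi.smul_apply, Pi.sub_apply, smul_eq_mul] at this ⊢
    have hk1' : (T.card : ℝ) + 1 ≠ 0 := by linarith
    field_simp at this ⊢
    nlinarith [this]
  rw [hxm, vecMulVec_smul_smul] at key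
  have hk1' : (T.card : ℝ) + 1 ≠ 0 := by linarith
  have hcoef : (((insert i' T).card : ℝ) / (((insert i' T).card : ℝ) - 1))
      * (((T.card : ℝ) / ((T.card : ℝ) + 1)) * ((T.card : ℝ) / ((T.card : ℝ) + 1)))
      = (T.card : ℝ) / ((T.card : ℝ) + 1) := by
    rw [hcardI]; push_cast; rw [add_sub_cancel_right]; field_simp
  rw [smul_smul, hcoef] at key
  -- key : ssp T m = ssp (insert i' T) m'' - (k/(k+1)) • vv
  rw [key]; abel

lemma det_rank_two_update (W : Matrix (Fin d) (Fin d) ℝ) (hW : IsUnit W.det)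
    (u v : Fin d → ℝ) (α β : ℝ) :
    (W + α • Matrix.vecMulVec u u + β • Matrix.vecMulVec v v).det
      = W.det * ((1 + α * (u ⬝ᵥ W⁻¹ *ᵥ u)) * (1 + β * (v ⬝ᵥ W⁻¹ *ᵥ v))
          - α * β * (u ⬝ᵥ W⁻¹ *ᵥ v) * (v ⬝ᵥ W⁻¹ *ᵥ u)) := by
  set U : Matrix (Fin d) (Fin 2) ℝ := Matrix.of fun p q => if q = 0 then α * u p else β * v p
    with hU
  set V : Matrix (Fin 2) (Fin d) ℝ := Matrix.of fun q p => if q = 0 then u p else v p with hV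
  have hUV : α • Matrix.vecMulVec u u + β • Matrix.vecMulVec v v = U * V := by
    ext p p'
    simp [hU, hV, Matrix.mul_apply, Fin.sum_univ_two, Matrix.vecMulVec_apply]
    ring
  have hfact : W + U * V = W * (1 + (W⁻¹ * U) * V) := by
    rw [Matrix.mul_add, mul_one, ← Matrix.mul_assoc, ← Matrix.mul_assoc,
      Matrix.mul_nonsing_inv W hW, Matrix.one_mul]
  have hdet : (W + α • Matrix.vecMulVec u u + β • Matrix.vecMulVec v v).det
      = W.det * (1 + V * (W⁻¹ * U)).det := by
    rw [add_assoc, hUV, hfact, Matrix.det_mul, Matrix.det_one_add_mul_comm]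
  rw [hdet]
  congr 1
  have hentry : ∀ (a b : Fin d → ℝ) (c : ℝ),
      (∑ p, a p * ∑ r, W⁻¹ p r * (c * b r)) = c * (a ⬝ᵥ W⁻¹ *ᵥ b) := by
    intro a b c
    simp only [dotProduct, Matrix.mulVec, dotProduct, Finset.mul_sum]
    exact Finset.sum_congr rfl fun p _ => Finset.sum_congr rfl fun r _ => by ring
  rw [Matrix.det_fin_two]
  have e00 : ((1 + V * (W⁻¹ * U)) : Matrix (Fin 2) (Fin 2) ℝ) 0 0 = 1 + α * (u ⬝ᵥ W⁻¹ *ᵥ u) := by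
    simp [Matrix.add_apply, Matrix.one_apply, hU, hV, Matrix.mul_apply, hentry]
  have e01 : ((1 + V * (W⁻¹ * U)) : Matrix (Fin 2) (Fin 2) ℝ) 0 1 = β * (u ⬝ᵥ W⁻¹ *ᵥ v) := by
    simp [Matrix.add_apply, Matrix.one_apply, hU, hV, Matrix.mul_apply, hentry]
  have e10 : ((1 + V * (W⁻¹ * U)) : Matrix (Fin 2) (Fin 2) ℝ) 1 0 = α * (v ⬝ᵥ W⁻¹ *ᵥ u) := by
    simp [Matrix.add_apply, Matrix.one_apply, hU, hV, Matrix.mul_apply, hentry]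
  have e11 : ((1 + V * (W⁻¹ * U)) : Matrix (Fin 2) (Fin 2) ℝ) 1 1 = 1 + β * (v ⬝ᵥ W⁻¹ *ᵥ v) := by
    simp [Matrix.add_apply, Matrix.one_apply, hU, hV, Matrix.mul_apply, hentry]
  rw [e00, e01, e10, e11]
  ring

lemma psd_nonneg {M : Matrix (Fin d) (Fin d) ℝ} (h : M.PosSemidef) (u : Fin d → ℝ) :
    0 ≤ u ⬝ᵥ M *ᵥ u := by
  have := h.dotProduct_mulVec_nonneg u; simpa using this

lemma herm_symm {M : Matrix (Fin d) (Fin d) ℝ} (h : M.IsHermitian) (u v : Fin d → ℝ) :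
    u ⬝ᵥ M *ᵥ v = v ⬝ᵥ M *ᵥ u := by
  have hM : ∀ p q, M p q = M q p := by
    intro p q
    have := congrFun (congrFun h.eq p) q
    simpa [Matrix.conjTranspose_apply] using this.symm
  simp only [dotProduct, Matrix.mulVec, dotProduct, Finset.mul_sum]
  rw [Finset.sum_comm]
  refine Finset.sum_congr rfl fun p _ => Finset.sum_congr rfl fun q _ => ?_
  rw [hM q p]; ring

lemma quad_add (M : Matrix (Fin d) (Fin d) ℝ) (u v : Fin d → ℝ) :
    (u + v) ⬝ᵥ M *ᵥ (u + v) = u ⬝ᵥ M *ᵥ u + u ⬝ᵥ M *ᵥ v + v ⬝ᵥ M *ᵥ u + v ⬝ᵥ M *ᵥ v := by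
  simp [Matrix.mulVec_add, dotProduct_add, add_dotProduct]
  ring

lemma quad_smul (M : Matrix (Fin d) (Fin d) ℝ) (c : ℝ) (u v : Fin d → ℝ) :
    u ⬝ᵥ M *ᵥ (c • v) = c * (u ⬝ᵥ M *ᵥ v) := by
  simp [Matrix.mulVec_smul]

lemma smul_quad (M : Matrix (Fin d) (Fin d) ℝ) (c : ℝ) (u v : Fin d → ℝ) :
    (c • u) ⬝ᵥ M *ᵥ v = c * (u ⬝ᵥ M *ᵥ v) := by
  simp

/-- Cauchy–Schwarz for a positive semidefinite matrix -/
lemma psd_cauchy_schwarz {M : Matrix (Fin d) (Fin d) ℝ} (h : M.PosSemidef) (u v : Fin d → ℝ) :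
    (u ⬝ᵥ M *ᵥ v) * (v ⬝ᵥ M *ᵥ u) ≤ (u ⬝ᵥ M *ᵥ u) * (v ⬝ᵥ M *ᵥ v) := by
  have hsym := herm_symm h.1 u v
  set a := u ⬝ᵥ M *ᵥ u
  set b := v ⬝ᵥ M *ᵥ v
  set c := u ⬝ᵥ M *ᵥ v with hc
  have hq : ∀ t : ℝ, 0 ≤ a * (t * t) + (2 * c) * t + b := by
    intro t
    have h0 := psd_nonneg h (t • u + v)
    rw [quad_add, quad_smul, smul_quad, smul_quad, quad_smul, ← hsym] at h0
    nlinarith [h0]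
  have := discrim_le_zero hq
  rw [discrim] at this
  rw [← hsym]
  nlinarith [this]

lemma sum_update {M : Type*} [AddCommGroup M] (F : Fin g → Finset (Fin n) → M)
    (C : Fin g → Finset (Fin n)) (j : Fin g) (A : Finset (Fin n)) :
    ∑ j', F j' (Function.update C j A j')
      = (∑ j', F j' (C j')) + (F j A - F j (C j)) := by
  have : ∀ j', F j' (Function.update C j A j')
      = F j' (C j') + (if j' = j then F j A - F j (C j) else 0) := by
    intro j'
    by_cases h : j' = j
    · subst h; simp
    · simp [Function.update_apply, h]
  rw [Finset.sum_congr rfl fun j' _ => this j', Finset.sum_add_distrib]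
  simp

lemma config_swap {r : ℕ} {C P : Fin g → Finset (Fin n)} {i i' : Fin n} {j₀ l₀ : Fin g}
    (hC : IsConfig r C) (hij : i ∈ C j₀) (hi' : i' ∉ Finset.univ.biUnion C)
    (hsub : ∀ j', P j' ⊆ insert i' (C j'))
    (hnoti : ∀ j', i ∉ P j')
    (hil : i' ∈ P l₀)
    (hnoti' : ∀ j', j' ≠ l₀ → i' ∉ P j')
    (hmem : ∀ a, a ≠ i → a ≠ i' → ∀ j', a ∈ C j' → a ∈ P j') :
    IsConfig r P := by
  have hi'C : ∀ j', i' ∉ C j' := by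
    intro j' h
    exact hi' (Finset.mem_biUnion.mpr ⟨j', Finset.mem_univ _, h⟩)
  constructor
  · intro j₁ j₂ hne
    rw [Finset.disjoint_left]
    intro a ha₁ ha₂
    rcases Finset.mem_insert.mp (hsub j₁ ha₁) with rfl | h₁
    · -- a = i'
      rcases eq_or_ne j₁ l₀ with rfl | h
      · exact hnoti' j₂ (fun h => hne h.symm) ha₂
      · exact hnoti' j₁ h ha₁
    · rcases Finset.mem_insert.mp (hsub j₂ ha₂) with rfl | h₂
      · exact hi'C j₁ h₁
      · exact Finset.disjoint_left.mp (hC.1 j₁ j₂ hne) h₁ h₂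
  · have hiu : i ∈ Finset.univ.biUnion C := Finset.mem_biUnion.mpr ⟨j₀, Finset.mem_univ _, hij⟩
    have hset : Finset.univ.biUnion P = insert i' ((Finset.univ.biUnion C).erase i) := by
      ext a
      simp only [Finset.mem_biUnion, Finset.mem_univ, true_and, Finset.mem_insert,
        Finset.mem_erase]
      constructor
      · rintro ⟨j', hj'⟩
        rcases Finset.mem_insert.mp (hsub j' hj') with rfl | h
        · exact Or.inl rfl
        · exact Or.inr ⟨fun h' => hnoti j' (h' ▸ hj'), ⟨j', h⟩⟩
      · rintro (rfl | ⟨hai, j', hj'⟩)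
        · exact ⟨l₀, hil⟩
        · rcases eq_or_ne a i' with rfl | hai'
          · exact ⟨l₀, hil⟩
          · exact ⟨j', hmem a hai hai' j' hj'⟩
    rw [hset, Finset.card_insert_of_notMem (fun h => hi' (Finset.mem_of_mem_erase h)),
      Finset.card_erase_of_mem hiu, hC.2]
    have : 1 ≤ r := hC.2 ▸ Finset.card_pos.mpr ⟨i, hiu⟩
    omega

lemma clusterMean_singleton (dflt : Fin d → ℝ) (i : Fin n) :
    clusterMean x dflt {i} = x i := by
  funext p
  rw [clusterMean_apply x (Finset.singleton_nonempty i) p]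
  simp

lemma ssp_singleton (dflt : Fin d → ℝ) (i : Fin n) :
    ssp x {i} (clusterMean x dflt {i}) = 0 := by
  rw [clusterMean_singleton]
  simp [ssp, Matrix.vecMulVec_apply]

end TDC

set_option maxHeartbeats 2000000 in
open TDC in
theorem tdc_ellipsoid_separation {n d g r : ℕ}
    (x : Fin n → Fin d → ℝ) (dflt : Fin g → Fin d → ℝ)
    (hpos : ∀ P : Fin g → Finset (Fin n), IsConfig r P → (pooledSSP x dflt P).PosDef)
    (C : Fin g → Finset (Fin n)) (hC : IsConfig r C)
    (hopt : ∀ P : Fin g → Finset (Fin n), IsConfig r P →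
      (pooledSSP x dflt C).det ≤ (pooledSSP x dflt P).det) :
    (∀ j : Fin g, (C j).Nonempty → ∀ i ∈ C j, ∀ i' : Fin n, i' ∉ Finset.univ.biUnion C →
      ∀ l : Fin g,
        (x i - clusterMean x (dflt j) (C j)) ⬝ᵥ
            ((pooledSSP x dflt C)⁻¹ *ᵥ (x i - clusterMean x (dflt j) (C j))) ≤
          (x i' - clusterMean x (dflt l) (C l)) ⬝ᵥ
            ((pooledSSP x dflt C)⁻¹ *ᵥ (x i' - clusterMean x (dflt l) (C l)))) ∧
    (∀ j : Fin g, (C j).Nonempty → ∃ K : ℝ,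
      (∀ i ∈ C j,
        (x i - clusterMean x (dflt j) (C j)) ⬝ᵥ
          ((pooledSSP x dflt C)⁻¹ *ᵥ (x i - clusterMean x (dflt j) (C j))) ≤ K) ∧
      (∀ i' : Fin n, i' ∉ Finset.univ.biUnion C →
        K ≤ (x i' - clusterMean x (dflt j) (C j)) ⬝ᵥ
          ((pooledSSP x dflt C)⁻¹ *ᵥ (x i' - clusterMean x (dflt j) (C j))))) := by
  classical
  have hW : (pooledSSP x dflt C).PosDef := hpos C hC
  set W := pooledSSP x dflt C with hWdef
  have hWdetpos : 0 < W.det := hW.det_pos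
  have hWunit : IsUnit W.det := hWdetpos.ne'.isUnit
  have hWinvPSD : (W⁻¹).PosSemidef := hW.inv.posSemidef
  have hsymm : ∀ u v : Fin d → ℝ, u ⬝ᵥ W⁻¹ *ᵥ v = v ⬝ᵥ W⁻¹ *ᵥ u :=
    fun u v => herm_symm hWinvPSD.1 u v
  have hF : ∀ P : Fin g → Finset (Fin n), pooledSSP x dflt P
      = ∑ j', TDC.ssp x (P j') (clusterMean x (dflt j') (P j')) := fun _ => rfl
  have main : ∀ j : Fin g, (C j).Nonempty → ∀ i ∈ C j, ∀ i' : Fin n,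
      i' ∉ Finset.univ.biUnion C → ∀ l : Fin g,
      (x i - clusterMean x (dflt j) (C j)) ⬝ᵥ
          (W⁻¹ *ᵥ (x i - clusterMean x (dflt j) (C j))) ≤
        (x i' - clusterMean x (dflt l) (C l)) ⬝ᵥ
          (W⁻¹ *ᵥ (x i' - clusterMean x (dflt l) (C l))) := by
    intro j hj i hi i' hi' l
    have hine : i ≠ i' := fun h =>
      hi' (Finset.mem_biUnion.mpr ⟨j, Finset.mem_univ _, h ▸ hi⟩)
    have hi'C : ∀ j', i' ∉ C j' := fun j' h =>
      hi' (Finset.mem_biUnion.mpr ⟨j', Finset.mem_univ _, h⟩)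
    set m := clusterMean x (dflt j) (C j) with hm
    set u := x i - m with hu
    set v := x i' - clusterMean x (dflt l) (C l) with hv
    set a := u ⬝ᵥ W⁻¹ *ᵥ u with hadef
    set b := v ⬝ᵥ W⁻¹ *ᵥ v with hbdef
    show a ≤ b
    have ha0 : 0 ≤ a := psd_nonneg hWinvPSD u
    have hb0 : 0 ≤ b := psd_nonneg hWinvPSD v
    rcases eq_or_lt_of_le (Nat.one_le_iff_ne_zero.mpr (Finset.card_ne_zero.mpr hj))
      with h1 | h2
    · -- singleton cluster: u = 0
      obtain ⟨i₀, hi₀⟩ := Finset.card_eq_one.mp h1.symm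
      have hii₀ : i = i₀ := by
        have := hi; rw [hi₀, Finset.mem_singleton] at this; exact this
      have hu0 : u = 0 := by
        rw [hu, hm, hi₀, ← hii₀, clusterMean_singleton, sub_self]
      have : a = 0 := by rw [hadef, hu0]; simp
      linarith
    · -- cluster of size ≥ 2
      have hk2n : 2 ≤ (C j).card := h2
      set k : ℝ := ((C j).card : ℝ) with hk
      have hk2 : (2:ℝ) ≤ k := by rw [hk]; exact_mod_cast hk2n
      have hk1pos : (0:ℝ) < k - 1 := by linarith
      have hkpos : (0:ℝ) < k := by linarith
      set α : ℝ := k / (k - 1) with hα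
      have hα1 : 1 ≤ α := by rw [hα, le_div_iff₀ hk1pos]; linarith
      have hαpos : 0 < α := by positivity
      have hEne : ((C j).erase i).Nonempty := by
        rw [← Finset.card_pos, Finset.card_erase_of_mem hi]; omega
      have hcE : ((((C j).erase i)).card : ℝ) = k - 1 := by
        rw [Finset.card_erase_of_mem hi]
        have : 1 ≤ (C j).card := by omega
        push_cast [Nat.cast_sub this]; ring
      have hsspE : TDC.ssp x ((C j).erase i) (clusterMean x (dflt j) ((C j).erase i))
          = TDC.ssp x (C j) m - α • Matrix.vecMulVec u u :=
        ssp_erase x hi hk2n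
      by_cases hlj : l = j
      · -- swap inside the same cluster
        subst hlj
        set T := (C l).erase i with hT
        have hi'T : i' ∉ T := fun h => hi'C l (Finset.mem_of_mem_erase h)
        set P := Function.update C l (insert i' T) with hP
        have hPconf : IsConfig r P := by
          refine config_swap (j₀ := l) (l₀ := l) hC hi hi' ?_ ?_ ?_ ?_ ?_
          · intro j'
            rcases eq_or_ne j' l with rfl | h
            · rw [hP, Function.update_self]
              exact Finset.insert_subset_insert _ (Finset.erase_subset _ _)
            · rw [hP, Function.update_of_ne h]
              exact Finset.subset_insert _ _
          · intro j' hmem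
            rcases eq_or_ne j' l with rfl | h
            · rw [hP, Function.update_self, Finset.mem_insert] at hmem
              rcases hmem with h' | h'
              · exact hine h'
              · exact (Finset.notMem_erase i _) h'
            · rw [hP, Function.update_of_ne h] at hmem
              exact Finset.disjoint_left.mp (hC.1 j' l h) hmem hi
          · rw [hP, Function.update_self]; exact Finset.mem_insert_self _ _
          · intro j' h
            rw [hP, Function.update_of_ne h]
            exact hi'C j'
          · intro a' ha'i ha'i' j' hj'
            rcases eq_or_ne j' l with rfl | h
            · rw [hP, Function.update_self]
              exact Finset.mem_insert_of_mem (Finset.mem_erase.mpr ⟨ha'i, hj'⟩)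
            · rw [hP, Function.update_of_ne h]; exact hj'
        have hwm : clusterMean x (dflt l) T
            = m + (k - 1)⁻¹ • (m - x i) := mean_erase x hi hk2n
        set w := x i' - clusterMean x (dflt l) T with hwdef
        have hwv : w = v + (k - 1)⁻¹ • u := by
          rw [hwdef, hwm, hv, hu]
          funext p
          simp only [Pi.sub_apply, Pi.add_apply, Pi.smul_apply, smul_eq_mul]
          ring
        set β : ℝ := (k - 1) / k with hβ
        have hsspI : TDC.ssp x (insert i' T) (clusterMean x (dflt l) (insert i' T))
            = TDC.ssp x T (clusterMean x (dflt l) T) + β • Matrix.vecMulVec w w := by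
          have h := ssp_insert x (dflt := dflt l) (dflt' := dflt l) hEne hi'T
          rw [hcE] at h
          rw [h, hβ, hwdef]
          norm_num
        have hPSSP : pooledSSP x dflt P
            = W + (-α) • Matrix.vecMulVec u u + β • Matrix.vecMulVec w w := by
          rw [hF P, hP,
            sum_update (fun j' S => TDC.ssp x S (clusterMean x (dflt j') S)) C l
              (insert i' T),
            hsspI, hsspE, ← hF C, ← hWdef, neg_smul]
          abel
        have hopt' := hopt P hPconf
        rw [hPSSP, det_rank_two_update W hWunit u w (-α) β] at hopt'
        set c1 := u ⬝ᵥ W⁻¹ *ᵥ w with hc1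
        set qw := w ⬝ᵥ W⁻¹ *ᵥ w with hqwdef
        rw [hsymm w u, ← hc1] at hopt'
        have hqw0 : 0 ≤ qw := psd_nonneg hWinvPSD w
        have hE : 1 ≤ (1 + (-α) * a) * (1 + β * qw) - (-α) * β * c1 * c1 := by
          nlinarith [hopt', hWdetpos]
        have hCS : c1 * c1 ≤ a * qw := by
          have h := psd_cauchy_schwarz hWinvPSD u w
          rw [hsymm w u, ← hc1] at h
          exact h
        have hβpos : 0 < β := by positivity
        have hαa : α * a ≤ β * qw := by
          nlinarith [hE, mul_le_mul_of_nonneg_left hCS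
            (le_of_lt (mul_pos hαpos hβpos))]
        set c := u ⬝ᵥ W⁻¹ *ᵥ v with hc
        have hqw : qw = b + 2 * (k - 1)⁻¹ * c + (k - 1)⁻¹ * ((k - 1)⁻¹ * a) := by
          rw [hqwdef, hwv, quad_add, quad_smul, smul_quad, smul_quad, quad_smul,
            hsymm v u, ← hc, ← hbdef, ← hadef]
          ring
        have h2c : 2 * c ≤ a + b := by
          have h0 := psd_nonneg hWinvPSD (u + (-1 : ℝ) • v)
          rw [quad_add, quad_smul, smul_quad, smul_quad, quad_smul,
            hsymm v u, ← hc, ← hadef, ← hbdef] at h0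
          linarith
        have hstep : k * k * a ≤ (k - 1) * (k - 1) * b + 2 * (k - 1) * c + a := by
          have h3 := mul_le_mul_of_nonneg_left hαa (le_of_lt (mul_pos hkpos hk1pos))
          rw [hqw, hα, hβ] at h3
          have hkne : k ≠ 0 := ne_of_gt hkpos
          have hk1ne : k - 1 ≠ 0 := ne_of_gt hk1pos
          have h4 : k * (k - 1) * (k / (k - 1) * a) = k * k * a := by
            field_simp
          have h5 : k * (k - 1) * ((k - 1) / k *
              (b + 2 * (k - 1)⁻¹ * c + (k - 1)⁻¹ * ((k - 1)⁻¹ * a)))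
              = (k - 1) * (k - 1) * b + 2 * (k - 1) * c + a := by
            field_simp
          rw [h4, h5] at h3
          exact h3
        nlinarith [hstep, mul_le_mul_of_nonneg_left h2c (le_of_lt hk1pos), hk2, ha0, hb0]
      · -- move i' to a different cluster
        have hjl : j ≠ l := fun h => hlj h.symm
        set P := Function.update (Function.update C j ((C j).erase i)) l
          (insert i' (C l)) with hP
        have hPl : P l = insert i' (C l) := by rw [hP, Function.update_self]
        have hPj : P j = (C j).erase i := by
          rw [hP, Function.update_of_ne hjl, Function.update_self]
        have hPo : ∀ j', j' ≠ j → j' ≠ l → P j' = C j' := by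
          intro j' h1 h2
          rw [hP, Function.update_of_ne h2, Function.update_of_ne h1]
        have hPconf : IsConfig r P := by
          refine config_swap (j₀ := j) (l₀ := l) hC hi hi' ?_ ?_ ?_ ?_ ?_
          · intro j'
            rcases eq_or_ne j' l with rfl | h1
            · rw [hPl]
            · rcases eq_or_ne j' j with rfl | h2
              · rw [hPj]
                exact subset_trans (Finset.erase_subset _ _) (Finset.subset_insert _ _)
              · rw [hPo j' h2 h1]
                exact Finset.subset_insert _ _
          · intro j' hmem
            rcases eq_or_ne j' l with rfl | h1
            · rw [hPl, Finset.mem_insert] at hmem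
              rcases hmem with h' | h'
              · exact hine h'
              · exact Finset.disjoint_left.mp (hC.1 j j' hjl) hi h'
            · rcases eq_or_ne j' j with rfl | h2
              · rw [hPj] at hmem
                exact (Finset.notMem_erase i _) hmem
              · rw [hPo j' h2 h1] at hmem
                exact Finset.disjoint_left.mp (hC.1 j' j h2) hmem hi
          · rw [hPl]; exact Finset.mem_insert_self _ _
          · intro j' h1
            rcases eq_or_ne j' j with rfl | h2
            · rw [hPj]
              exact fun h => hi'C j' (Finset.mem_of_mem_erase h)
            · rw [hPo j' h2 h1]
              exact hi'C j'
          · intro a' ha'i ha'i' j' hj'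
            rcases eq_or_ne j' l with rfl | h1
            · rw [hPl]; exact Finset.mem_insert_of_mem hj'
            · rcases eq_or_ne j' j with rfl | h2
              · rw [hPj]; exact Finset.mem_erase.mpr ⟨ha'i, hj'⟩
              · rw [hPo j' h2 h1]; exact hj'
        have hsum1 : pooledSSP x dflt P
            = W + (TDC.ssp x ((C j).erase i) (clusterMean x (dflt j) ((C j).erase i))
                - TDC.ssp x (C j) (clusterMean x (dflt j) (C j)))
              + (TDC.ssp x (insert i' (C l)) (clusterMean x (dflt l) (insert i' (C l)))
                - TDC.ssp x (C l) (clusterMean x (dflt l) (C l))) := by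
          rw [hF P, hP,
            sum_update (fun j' S => TDC.ssp x S (clusterMean x (dflt j') S))
              (Function.update C j ((C j).erase i)) l (insert i' (C l)),
            sum_update (fun j' S => TDC.ssp x S (clusterMean x (dflt j') S)) C j
              ((C j).erase i),
            Function.update_of_ne (Ne.symm hjl), ← hF C, ← hWdef]
        by_cases hCl : (C l).Nonempty
        · -- target cluster nonempty
          set kl : ℝ := ((C l).card : ℝ) with hkl
          have hklpos : (0:ℝ) < kl := by
            rw [hkl]
            exact_mod_cast Finset.card_pos.mpr hCl
          set β : ℝ := kl / (kl + 1) with hβ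
          have hβpos : 0 < β := by positivity
          have hβ1 : β ≤ 1 := by
            rw [hβ, div_le_one (by positivity)]; linarith
          have hsspI : TDC.ssp x (insert i' (C l))
                (clusterMean x (dflt l) (insert i' (C l)))
              = TDC.ssp x (C l) (clusterMean x (dflt l) (C l))
                + β • Matrix.vecMulVec v v :=
            ssp_insert x hCl (hi'C l)
          have hPSSP : pooledSSP x dflt P
              = W + (-α) • Matrix.vecMulVec u u + β • Matrix.vecMulVec v v := by
            rw [hsum1, hsspI, hsspE, ← hm, neg_smul]
            abel
          have hopt' := hopt P hPconf
          rw [hPSSP, det_rank_two_update W hWunit u v (-α) β] at hopt'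
          set c := u ⬝ᵥ W⁻¹ *ᵥ v with hc
          rw [hsymm v u, ← hc, ← hadef, ← hbdef] at hopt'
          have hE : 1 ≤ (1 + -α * a) * (1 + β * b) - -α * β * c * c := by
            nlinarith [hopt', hWdetpos]
          have hCS : c * c ≤ a * b := by
            have h := psd_cauchy_schwarz hWinvPSD u v
            rw [hsymm v u, ← hc, ← hadef, ← hbdef] at h
            exact h
          have hαa : α * a ≤ β * b := by
            nlinarith [hE, mul_le_mul_of_nonneg_left hCS
              (le_of_lt (mul_pos hαpos hβpos))]
          nlinarith [hαa, mul_nonneg (sub_nonneg.mpr hα1) ha0,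
            mul_nonneg (sub_nonneg.mpr hβ1) hb0]
        · -- target cluster empty
          rw [Finset.not_nonempty_iff_eq_empty] at hCl
          have hins : insert i' (C l) = {i'} := by rw [hCl]; rfl
          have hz1 : TDC.ssp x (insert i' (C l))
              (clusterMean x (dflt l) (insert i' (C l))) = 0 := by
            rw [hins]; exact ssp_singleton x (dflt l) i'
          have hz2 : TDC.ssp x (C l) (clusterMean x (dflt l) (C l)) = 0 := by
            rw [hCl]; simp [TDC.ssp]
          have hPSSP : pooledSSP x dflt P
              = W + (-α) • Matrix.vecMulVec u u + (0:ℝ) • Matrix.vecMulVec v v := by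
            rw [hsum1, hz1, hz2, hsspE, ← hm, neg_smul, zero_smul]
            abel
          have hopt' := hopt P hPconf
          rw [hPSSP, det_rank_two_update W hWunit u v (-α) 0] at hopt'
          rw [← hadef] at hopt'
          have hE : 1 ≤ (1 + -α * a) * (1 + 0 * (v ⬝ᵥ W⁻¹ *ᵥ v))
              - -α * 0 * (u ⬝ᵥ W⁻¹ *ᵥ v) * (v ⬝ᵥ W⁻¹ *ᵥ u) := by
            nlinarith [hopt', hWdetpos]
          nlinarith [hE, mul_nonneg (sub_nonneg.mpr hα1) ha0, hb0]
  refine ⟨main, ?_⟩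
  intro j hj
  refine ⟨(C j).sup' hj (fun i => (x i - clusterMean x (dflt j) (C j)) ⬝ᵥ
      (W⁻¹ *ᵥ (x i - clusterMean x (dflt j) (C j)))), fun i hi => Finset.le_sup' (fun i'' => (x i'' - clusterMean x (dflt j) (C j)) ⬝ᵥ
      (W⁻¹ *ᵥ (x i'' - clusterMean x (dflt j) (C j)))) hi,
    fun i' hi' => Finset.sup'_le _ _ fun i hi => main j hj i hi i' hi' j⟩
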